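/- Let 𝔇 := [t₀, t₁] × C where C ⊂ ℝ² is a convex set, and let D : ℝ × ℝ² → ℝ be twice continuously differentiable with ∇D ≠ 0 in a neighborhood of 𝔇. Fix points (t₀, r₀) and (t₁, r₁) in 𝔇 and consider the concatenated path going first along ζ(s) := (s, r₀) for s ∈ [t₀, t₁] and then along ξ(s) := (t₁, (1−s)r₀ + s r₁) for s ∈ [0,1]. If φ is a differentiable angle lift of the gradient along this concatenated path (i.e., ∇D = ‖∇D‖(cos φ, sin φ) along the path), then the total rotation of the gradient satisfies |φ(end) − φ(start)| ≤ (sup_{p ∈ 𝔇} |ω_∇(p)|)·(t₁ − t₀) + (sup_{p ∈ 𝔇} √(κ(p)² + τ_ρ(p)²))·‖r₁ − r₀‖, which in particular is at most (sup_{p ∈ 𝔇} |ω_∇(p)|)·(t₁ − t₀) + (sup_{p ∈ 𝔇} √(κ(p)² + τ_ρ(p)²))·diam(C). -/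

import Mathlib

open Real Set
open scoped RealInnerProductSpace
noncomputable section

/-- The plane ℝ². -/
abbrev Plane := EuclideanSpace ℝ (Fin 2)

/-- Spatial gradient ∇D of the field. -/
def sgrad (D : ℝ × Plane → ℝ) (t : ℝ) (r : Plane) : Plane :=
  gradient (fun p => D (t, p)) r

/-- Partial time derivative D′_t of the field. -/
def dT (D : ℝ × Plane → ℝ) (t : ℝ) (r : Plane) : ℝ :=
  deriv (fun s => D (s, r)) t

/-- Second partial time derivative D″_tt of the field. -/
def dTT (D : ℝ × Plane → ℝ) (t : ℝ) (r : Plane) : ℝ :=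
  deriv (fun s => dT D s r) t

/-- Spatial gradient ∇D′_t of the partial time derivative. -/
def sgradDt (D : ℝ × Plane → ℝ) (t : ℝ) (r : Plane) : Plane :=
  gradient (fun p => dT D t p) r

/-- Spatial Hessian D″ applied to a vector v. -/
def hess (D : ℝ × Plane → ℝ) (t : ℝ) (r : Plane) (v : Plane) : Plane :=
  fderiv ℝ (fun p => sgrad D t p) r v

/-- Clockwise rotation through π/2, i.e. R_{−π/2}. -/
def rotCW (v : Plane) : Plane := !₂[v 1, -(v 0)]

/-- The unit normal N = ∇D/‖∇D‖ of the isoline. -/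
def unitN (D : ℝ × Plane → ℝ) (t : ℝ) (r : Plane) : Plane :=
  ‖sgrad D t r‖⁻¹ • sgrad D t r

/-- The unit tangent T = R_{−π/2} N of the isoline. -/
def unitT (D : ℝ × Plane → ℝ) (t : ℝ) (r : Plane) : Plane :=
  rotCW (unitN D t r)

/-- The density of isolines ρ = ‖∇D‖. -/
def rho (D : ℝ × Plane → ℝ) (t : ℝ) (r : Plane) : ℝ := ‖sgrad D t r‖

/-- The front velocity λ = −D′_t/‖∇D‖ of the isoline. -/
def lam (D : ℝ × Plane → ℝ) (t : ℝ) (r : Plane) : ℝ :=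
  -(dT D t r) / ‖sgrad D t r‖

/-- The proportional growth rate v_ρ = ⟨∇D′_t + λD″N, N⟩/‖∇D‖ of the density ρ
    along the moving isoline. -/
def vRho (D : ℝ × Plane → ℝ) (t : ℝ) (r : Plane) : ℝ :=
  ⟪sgradDt D t r + lam D t r • hess D t r (unitN D t r), unitN D t r⟫ / ‖sgrad D t r‖

/-- The angular velocity ω = −⟨∇D′_t + λD″N, T⟩/‖∇D‖ of rotation of the isoline. -/
def omg (D : ℝ × Plane → ℝ) (t : ℝ) (r : Plane) : ℝ :=
  -⟪sgradDt D t r + lam D t r • hess D t r (unitN D t r), unitT D t r⟫ / ‖sgrad D t r‖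

/-- The front acceleration α of the isoline. -/
def alph (D : ℝ × Plane → ℝ) (t : ℝ) (r : Plane) : ℝ :=
  -(dTT D t r + lam D t r * ⟪sgradDt D t r, unitN D t r⟫) / ‖sgrad D t r‖
    - lam D t r * vRho D t r

/-- The signed curvature κ = −⟨D″T, T⟩/‖∇D‖ of the isoline. -/
def kap (D : ℝ × Plane → ℝ) (t : ℝ) (r : Plane) : ℝ :=
  -⟪hess D t r (unitT D t r), unitT D t r⟫ / ‖sgrad D t r‖

/-- The proportional growth rate τ_ρ = ⟨D″N, T⟩/‖∇D‖ of the density ρ under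
    tangential displacement. -/
def tauRho (D : ℝ × Plane → ℝ) (t : ℝ) (r : Plane) : ℝ :=
  ⟪hess D t r (unitN D t r), unitT D t r⟫ / ‖sgrad D t r‖

/-- The proportional growth rate n_ρ = ⟨D″N, N⟩/‖∇D‖ of the density ρ under
    normal displacement. -/
def nRho (D : ℝ × Plane → ℝ) (t : ℝ) (r : Plane) : ℝ :=
  ⟪hess D t r (unitN D t r), unitN D t r⟫ / ‖sgrad D t r‖

/-- The angular velocity ω_∇ = −⟨∇D′_t, T⟩/‖∇D‖ of rotation of the gradient. -/
def omgGrad (D : ℝ × Plane → ℝ) (t : ℝ) (r : Plane) : ℝ :=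
  -⟪sgradDt D t r, unitT D t r⟫ / ‖sgrad D t r‖

/-- The unit velocity-orientation vector e(θ) = (cos θ, sin θ). -/
def eVec (θ : ℝ) : Plane := !₂[Real.cos θ, Real.sin θ]

def Jvec (v : Plane) : Plane := !₂[-(v 1), v 0]

lemma inner_plane (x y : Plane) : ⟪x, y⟫ = x 0 * y 0 + x 1 * y 1 := by
  simp [PiLp.inner_apply, Fin.sum_univ_two, RCLike.inner_apply]; ring

lemma sq_norm_plane (x : Plane) : x 0 ^ 2 + x 1 ^ 2 = ‖x‖ ^ 2 := by
  rw [← real_inner_self_eq_norm_sq, inner_plane]; ring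

lemma vtwo_eq (a b : ℝ) : (!₂[a, b] : Plane) = a • (!₂[1,0] : Plane) + b • (!₂[0,1] : Plane) := by
  ext i; fin_cases i <;> simp [PiLp.add_apply, PiLp.smul_apply]

lemma hasDerivAt_vec2 {a b : ℝ → ℝ} {a' b' s : ℝ} (ha : HasDerivAt a a' s)
    (hb : HasDerivAt b b' s) :
    HasDerivAt (F := Plane) (fun u => !₂[a u, b u]) !₂[a', b'] s := by
  have hfun : ∀ x y : ℝ, (!₂[x, y] : Plane)
      = x • EuclideanSpace.single (0 : Fin 2) (1:ℝ) + y • EuclideanSpace.single (1 : Fin 2) (1:ℝ) := by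
    intro x y; ext i
    fin_cases i <;> simp [EuclideanSpace.single_apply, PiLp.add_apply, PiLp.smul_apply]
  have h := (ha.smul_const (EuclideanSpace.single (0 : Fin 2) (1:ℝ))).add
            (hb.smul_const (EuclideanSpace.single (1 : Fin 2) (1:ℝ)))
  simp only [hfun]
  exact h

lemma inner_Jvec_eq (w : Plane) (θ : ℝ) : ⟪w, Jvec (eVec θ)⟫ = -⟪w, rotCW (eVec θ)⟫ := by
  simp [inner_plane, Jvec, rotCW, eVec]; ring

lemma parseval (v N : Plane) (hN : ‖N‖ = 1) :
    ⟪v, N⟫ ^ 2 + ⟪v, rotCW N⟫ ^ 2 = ‖v‖ ^ 2 := by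
  have h1 : N 0 ^ 2 + N 1 ^ 2 = 1 := by rw [sq_norm_plane, hN]; norm_num
  rw [← sq_norm_plane v]
  simp only [inner_plane, rotCW]
  simp only [PiLp.toLp_apply, Matrix.cons_val_zero, Matrix.cons_val_one, Matrix.head_cons]
  ring_nf
  nlinarith [h1]

lemma decomp (v N : Plane) (hN : ‖N‖ = 1) :
    v = ⟪v, N⟫ • N + ⟪v, rotCW N⟫ • rotCW N := by
  have h1 : N 0 ^ 2 + N 1 ^ 2 = 1 := by rw [sq_norm_plane, hN]; norm_num
  ext i
  fin_cases i <;>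
    simp only [inner_plane, rotCW, PiLp.toLp_apply, PiLp.add_apply, PiLp.smul_apply, smul_eq_mul, Fin.mk_zero,
      Fin.mk_one, Matrix.cons_val_zero, Matrix.cons_val_one, Matrix.head_cons]
  · linear_combination (-(v 0)) * h1
  · linear_combination (-(v 1)) * h1

lemma norm_eVec (θ : ℝ) : ‖eVec θ‖ = 1 := by
  have h : ‖eVec θ‖ ^ 2 = 1 := by
    rw [← sq_norm_plane]
    simp only [eVec, PiLp.toLp_apply, Matrix.cons_val_zero, Matrix.cons_val_one, Matrix.head_cons]
    exact Real.cos_sq_add_sin_sq θ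
  nlinarith [norm_nonneg (eVec θ)]

lemma key_rot {g : ℝ → Plane} {θ : ℝ → ℝ} {g' : Plane} {θ' : ℝ} {S : Set ℝ} {s : ℝ}
    (hS : UniqueDiffWithinAt ℝ S s) (hsS : s ∈ S)
    (hg : HasDerivAt g g' s) (hθ : HasDerivAt θ θ' s)
    (hlift : ∀ u ∈ S, g u = ‖g u‖ • eVec (θ u)) :
    ‖g s‖ * θ' = ⟪g', Jvec (eVec (θ s))⟫ := by
  set m : ℝ → Plane := fun u => !₂[-(Real.sin (θ u)), Real.cos (θ u)] with hm
  have hms : m s = Jvec (eVec (θ s)) := by simp [hm, Jvec, eVec]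
  have hmd : HasDerivAt m (!₂[-(Real.cos (θ s) * θ'), -(Real.sin (θ s) * θ')] : Plane) s := by
    apply hasDerivAt_vec2
    · exact ((Real.hasDerivAt_sin (θ s)).comp s hθ).neg
    · simpa [neg_mul, Function.comp_def] using (Real.hasDerivAt_cos (θ s)).comp s hθ
  have hh : HasDerivWithinAt (fun u => ⟪g u, m u⟫)
      (⟪g s, (!₂[-(Real.cos (θ s) * θ'), -(Real.sin (θ s) * θ')] : Plane)⟫ + ⟪g', m s⟫) S s :=
    (hg.inner ℝ hmd).hasDerivWithinAt
  have hzero : ∀ u ∈ S, ⟪g u, m u⟫ = 0 := by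
    intro u hu
    rw [hlift u hu, real_inner_smul_left, inner_plane]
    simp only [hm, eVec, PiLp.toLp_apply, Matrix.cons_val_zero, Matrix.cons_val_one, Matrix.head_cons]
    ring
  have h1 : HasDerivWithinAt (fun u => ⟪g u, m u⟫) 0 S s :=
    (hasDerivWithinAt_const s S 0).congr hzero (hzero s hsS)
  have heq := hS.eq_deriv S hh h1
  have h2 : ⟪g s, (!₂[-(Real.cos (θ s) * θ'), -(Real.sin (θ s) * θ')] : Plane)⟫
      = -(‖g s‖ * θ') := by
    rw [hlift s hsS, real_inner_smul_left, inner_plane, norm_smul, norm_eVec]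
    simp only [eVec, PiLp.toLp_apply, Matrix.cons_val_zero, Matrix.cons_val_one, Matrix.head_cons, mul_one,
      Real.norm_eq_abs, abs_norm]
    linear_combination (-(‖g s‖ * θ')) * Real.cos_sq_add_sin_sq (θ s)
  rw [h2, hms] at heq
  linarith [heq]

/-- Standard basis of the plane. -/
def bas (i : Fin 2) : Plane := EuclideanSpace.single i (1 : ℝ)

lemma basis_decomp (u : Plane) : u = u 0 • bas 0 + u 1 • bas 1 := by
  ext i
  fin_cases i <;>
    simp [bas, EuclideanSpace.single_apply, PiLp.add_apply, PiLp.smul_apply]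

/-- The linear map recovering the spatial gradient from the full derivative. -/
def Lmap : ((ℝ × Plane) →L[ℝ] ℝ) →L[ℝ] Plane :=
  ((EuclideanSpace.equiv (Fin 2) ℝ).symm : (Fin 2 → ℝ) →L[ℝ] Plane).comp
    (ContinuousLinearMap.pi fun i =>
      ContinuousLinearMap.apply ℝ ℝ (((0 : ℝ), bas i) : ℝ × Plane))

lemma Lmap_coord (Φ : (ℝ × Plane) →L[ℝ] ℝ) (i : Fin 2) :
    Lmap Φ i = Φ (0, bas i) := rfl

lemma inner_Lmap (Φ : (ℝ × Plane) →L[ℝ] ℝ) (u : Plane) :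
    ⟪Lmap Φ, u⟫ = Φ (0, u) := by
  rw [inner_plane, Lmap_coord, Lmap_coord]
  have hu : ((0 : ℝ), u) = u 0 • (((0:ℝ), bas 0) : ℝ × Plane) + u 1 • (((0:ℝ), bas 1) : ℝ × Plane) := by
    rw [Prod.smul_mk, Prod.smul_mk, Prod.mk_add_mk, ← basis_decomp]
    simp
  rw [hu, map_add, map_smul, map_smul, smul_eq_mul, smul_eq_mul]; ring

lemma sgrad_eq {D : ℝ × Plane → ℝ} {t : ℝ} {r : Plane}
    (hd : DifferentiableAt ℝ D (t, r)) : sgrad D t r = Lmap (fderiv ℝ D (t, r)) := by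
  have h : HasFDerivAt (fun p => D (t, p))
      ((fderiv ℝ D (t, r)).comp (ContinuousLinearMap.inr ℝ ℝ Plane)) r :=
    hd.hasFDerivAt.comp r (hasFDerivAt_prodMk_right t r)
  apply ext_inner_right ℝ
  intro u
  rw [inner_Lmap]
  unfold sgrad gradient
  rw [InnerProductSpace.toDual_symm_apply, h.fderiv]
  rfl

lemma dT_eq {D : ℝ × Plane → ℝ} {t : ℝ} {r : Plane}
    (hd : DifferentiableAt ℝ D (t, r)) : dT D t r = fderiv ℝ D (t, r) (1, 0) := by
  have hline : HasDerivAt (fun u : ℝ => ((u, r) : ℝ × Plane)) (1, 0) t :=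
    (hasDerivAt_id t).prodMk (hasDerivAt_const t r)
  have h : HasDerivAt (fun u => D (u, r)) (fderiv ℝ D (t, r) (1, 0)) t :=
    hd.hasFDerivAt.comp_hasDerivAt t hline
  unfold dT
  exact h.deriv

open scoped Topology

lemma hasDerivAt_sgrad_time {D : ℝ × Plane → ℝ} {U : Set (ℝ × Plane)}
    (hU : IsOpen U) (hD : ContDiffOn ℝ 2 D U) {s : ℝ} {r₀ : Plane} (h : (s, r₀) ∈ U) :
    HasDerivAt (fun u => sgrad D u r₀) (sgradDt D s r₀) s := by
  have hdiff : ∀ p ∈ U, DifferentiableAt ℝ D p := fun p hp =>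
    (hD.differentiableOn (by norm_num)).differentiableAt (hU.mem_nhds hp)
  have hF : ContDiffOn ℝ 1 (fderiv ℝ D) U := hD.fderiv_of_isOpen hU (by norm_num)
  have hFd : DifferentiableAt ℝ (fderiv ℝ D) (s, r₀) :=
    (hF.differentiableOn one_ne_zero).differentiableAt (hU.mem_nhds h)
  have hline : HasDerivAt (fun u : ℝ => ((u, r₀) : ℝ × Plane)) (1, 0) s :=
    (hasDerivAt_id s).prodMk (hasDerivAt_const s r₀)
  have hnb : ∀ᶠ u in 𝓝 s, ((u, r₀) : ℝ × Plane) ∈ U :=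
    hline.continuousAt.preimage_mem_nhds (hU.mem_nhds h)
  have h1 : HasDerivAt (fun u => Lmap (fderiv ℝ D (u, r₀)))
      (Lmap (fderiv ℝ (fderiv ℝ D) (s, r₀) (1, 0))) s :=
    Lmap.hasFDerivAt.comp_hasDerivAt s (hFd.hasFDerivAt.comp_hasDerivAt s hline)
  have h2 : HasDerivAt (fun u => sgrad D u r₀)
      (Lmap (fderiv ℝ (fderiv ℝ D) (s, r₀) (1, 0))) s := by
    apply h1.congr_of_eventuallyEq
    filter_upwards [hnb] with u hu
    exact sgrad_eq (hdiff _ hu)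
  have hval : sgradDt D s r₀ = Lmap (fderiv ℝ (fderiv ℝ D) (s, r₀) (1, 0)) := by
    have hnb2 : ∀ᶠ p in 𝓝 r₀, ((s, p) : ℝ × Plane) ∈ U := by
      have hc : ContinuousAt (fun p : Plane => ((s, p) : ℝ × Plane)) r₀ :=
        (continuous_const.prodMk continuous_id).continuousAt
      exact hc.preimage_mem_nhds (hU.mem_nhds h)
    have h3 : HasFDerivAt (fun p => fderiv ℝ D (s, p))
        ((fderiv ℝ (fderiv ℝ D) (s, r₀)).comp (ContinuousLinearMap.inr ℝ ℝ Plane)) r₀ :=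
      hFd.hasFDerivAt.comp r₀ (hasFDerivAt_prodMk_right s r₀)
    have h4 : HasFDerivAt (fun p => fderiv ℝ D (s, p) ((1:ℝ), (0:Plane)))
        ((ContinuousLinearMap.apply ℝ ℝ (((1:ℝ), (0:Plane)) : ℝ × Plane)).comp
          ((fderiv ℝ (fderiv ℝ D) (s, r₀)).comp (ContinuousLinearMap.inr ℝ ℝ Plane))) r₀ :=
      (ContinuousLinearMap.apply ℝ ℝ (((1:ℝ), (0:Plane)) : ℝ × Plane)).hasFDerivAt.comp r₀ h3
    have h5 : HasFDerivAt (fun p => dT D s p)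
        ((ContinuousLinearMap.apply ℝ ℝ (((1:ℝ), (0:Plane)) : ℝ × Plane)).comp
          ((fderiv ℝ (fderiv ℝ D) (s, r₀)).comp (ContinuousLinearMap.inr ℝ ℝ Plane))) r₀ := by
      apply h4.congr_of_eventuallyEq
      filter_upwards [hnb2] with p hp
      exact dT_eq (hdiff _ hp)
    have hsymm : ∀ v w : ℝ × Plane,
        fderiv ℝ (fderiv ℝ D) (s, r₀) v w = fderiv ℝ (fderiv ℝ D) (s, r₀) w v := by
      intro v w
      refine second_derivative_symmetric_of_eventually (f := D) ?_ hFd.hasFDerivAt v w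
      filter_upwards [hU.mem_nhds h] with p hp
      exact (hdiff _ hp).hasFDerivAt
    apply ext_inner_right ℝ
    intro u
    calc ⟪sgradDt D s r₀, u⟫ = fderiv ℝ (fun p => dT D s p) r₀ u := by
          unfold sgradDt gradient; rw [InnerProductSpace.toDual_symm_apply]
      _ = fderiv ℝ (fderiv ℝ D) (s, r₀) (0, u) (1, 0) := by rw [h5.fderiv]; rfl
      _ = fderiv ℝ (fderiv ℝ D) (s, r₀) (1, 0) (0, u) := hsymm _ _
      _ = ⟪Lmap (fderiv ℝ (fderiv ℝ D) (s, r₀) (1, 0)), u⟫ := (inner_Lmap _ _).symm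
  rw [hval]
  exact h2

lemma hasFDerivAt_sgrad_space {D : ℝ × Plane → ℝ} {U : Set (ℝ × Plane)}
    (hU : IsOpen U) (hD : ContDiffOn ℝ 2 D U) {t : ℝ} {r : Plane} (h : (t, r) ∈ U) :
    HasFDerivAt (fun p => sgrad D t p)
      (Lmap.comp ((fderiv ℝ (fderiv ℝ D) (t, r)).comp
        (ContinuousLinearMap.inr ℝ ℝ Plane))) r := by
  have hdiff : ∀ p ∈ U, DifferentiableAt ℝ D p := fun p hp =>
    (hD.differentiableOn (by norm_num)).differentiableAt (hU.mem_nhds hp)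
  have hF : ContDiffOn ℝ 1 (fderiv ℝ D) U := hD.fderiv_of_isOpen hU (by norm_num)
  have hFd : DifferentiableAt ℝ (fderiv ℝ D) (t, r) :=
    (hF.differentiableOn one_ne_zero).differentiableAt (hU.mem_nhds h)
  have hnb2 : ∀ᶠ p in 𝓝 r, ((t, p) : ℝ × Plane) ∈ U := by
    have hc : ContinuousAt (fun p : Plane => ((t, p) : ℝ × Plane)) r :=
      (continuous_const.prodMk continuous_id).continuousAt
    exact hc.preimage_mem_nhds (hU.mem_nhds h)
  have h3 : HasFDerivAt (fun p => fderiv ℝ D (t, p))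
      ((fderiv ℝ (fderiv ℝ D) (t, r)).comp (ContinuousLinearMap.inr ℝ ℝ Plane)) r :=
    hFd.hasFDerivAt.comp r (hasFDerivAt_prodMk_right t r)
  have h1 : HasFDerivAt (fun p => Lmap (fderiv ℝ D (t, p)))
      (Lmap.comp ((fderiv ℝ (fderiv ℝ D) (t, r)).comp
        (ContinuousLinearMap.inr ℝ ℝ Plane))) r :=
    Lmap.hasFDerivAt.comp r h3
  apply h1.congr_of_eventuallyEq
  filter_upwards [hnb2] with p hp
  exact sgrad_eq (hdiff _ hp)

lemma unitN_eq {D : ℝ × Plane → ℝ} {t : ℝ} {r : Plane} {θ : ℝ}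
    (h0 : sgrad D t r ≠ 0) (hl : sgrad D t r = ‖sgrad D t r‖ • eVec θ) :
    unitN D t r = eVec θ := by
  have hρ : ‖sgrad D t r‖ ≠ 0 := norm_ne_zero_iff.2 h0
  rw [unitN]
  conv_lhs => rw [hl]
  rw [norm_smul, norm_eVec, mul_one, Real.norm_eq_abs, abs_norm, smul_smul,
    inv_mul_cancel₀ hρ, one_smul]

lemma norm_unitN {D : ℝ × Plane → ℝ} {t : ℝ} {r : Plane} (h0 : sgrad D t r ≠ 0) :
    ‖unitN D t r‖ = 1 := by
  rw [unitN, norm_smul, norm_inv, norm_norm,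
    inv_mul_cancel₀ (norm_ne_zero_iff.2 h0)]
set_option maxHeartbeats 1000000
/-- bound on the total rotation of the gradient between two points of
`𝔇 = [t₀,t₁] × C` (`C` convex) along the concatenated path consisting of the time
segment `ζ(s) = (s, r₀)`, `s ∈ [t₀,t₁]`, followed by the spatial segment
`ξ(s) = (t₁, (1−s)r₀ + s·r₁)`, `s ∈ [0,1]`: for differentiable angle lifts `φ` (along
`ζ`) and `ψ` (along `ξ`) matching at the junction, the total rotation is at most
`(sup_𝔇 |ω_∇|)·(t₁ − t₀) + (sup_𝔇 √(κ² + τ_ρ²))·‖r₁ − r₀‖`, and in particular at most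
`(sup_𝔇 |ω_∇|)·(t₁ − t₀) + (sup_𝔇 √(κ² + τ_ρ²))·diam C`. -/
theorem gradient_total_rotation_bound
    (D : ℝ × Plane → ℝ) (t₀ t₁ : ℝ) (ht : t₀ ≤ t₁) (C : Set Plane)
    (hC : Convex ℝ C) (r₀ r₁ : Plane) (hr₀ : r₀ ∈ C) (hr₁ : r₁ ∈ C)
    (U : Set (ℝ × Plane)) (hU : IsOpen U) (hDU : Icc t₀ t₁ ×ˢ C ⊆ U)
    (hD : ContDiffOn ℝ 2 D U) (hgrad : ∀ p ∈ U, sgrad D p.1 p.2 ≠ 0)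
    (φ φ' ψ ψ' : ℝ → ℝ)
    (hφ : ∀ s ∈ Icc t₀ t₁, HasDerivAt φ (φ' s) s)
    (hliftφ : ∀ s ∈ Icc t₀ t₁, sgrad D s r₀ = ‖sgrad D s r₀‖ • eVec (φ s))
    (hψ : ∀ s ∈ Icc (0:ℝ) 1, HasDerivAt ψ (ψ' s) s)
    (hliftψ : ∀ s ∈ Icc (0:ℝ) 1,
      sgrad D t₁ (r₀ + s • (r₁ - r₀))
        = ‖sgrad D t₁ (r₀ + s • (r₁ - r₀))‖ • eVec (ψ s))
    (hjunction : ψ 0 = φ t₁)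
    (A B : ℝ)
    (hA : ∀ p ∈ Icc t₀ t₁ ×ˢ C, |omgGrad D p.1 p.2| ≤ A)
    (hB : ∀ p ∈ Icc t₀ t₁ ×ˢ C,
      Real.sqrt ((kap D p.1 p.2) ^ 2 + (tauRho D p.1 p.2) ^ 2) ≤ B) :
    |ψ 1 - φ t₀| ≤ A * (t₁ - t₀) + B * ‖r₁ - r₀‖ ∧
    ENNReal.ofReal |ψ 1 - φ t₀|
      ≤ ENNReal.ofReal (A * (t₁ - t₀)) + ENNReal.ofReal B * EMetric.diam C := by
  set v := r₁ - r₀ with hv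
  have hB0 : 0 ≤ B := le_trans (Real.sqrt_nonneg _) (hB (t₀, r₀) ⟨⟨le_rfl, ht⟩, hr₀⟩)
  have hmemt : ∀ s ∈ Icc t₀ t₁, ((s, r₀) : ℝ × Plane) ∈ U := fun s hs => hDU ⟨hs, hr₀⟩
  have hcs : ∀ s ∈ Icc (0:ℝ) 1, r₀ + s • v ∈ C := by
    intro s hs
    have h := hC hr₀ hr₁ (sub_nonneg.2 hs.2) hs.1 (by ring)
    have heq : r₀ + s • v = (1 - s) • r₀ + s • r₁ := by
      rw [hv, smul_sub, sub_smul, one_smul]; abel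
    rwa [heq]
  have hmems : ∀ s ∈ Icc (0:ℝ) 1, ((t₁, r₀ + s • v) : ℝ × Plane) ∈ U :=
    fun s hs => hDU ⟨⟨ht, le_rfl⟩, hcs s hs⟩
  -- time part
  have hφbound : |φ t₁ - φ t₀| ≤ A * (t₁ - t₀) := by
    rcases eq_or_lt_of_le ht with heq | hlt
    · rw [← heq]; simp
    · have hder : ∀ s ∈ Icc t₀ t₁, φ' s = omgGrad D s r₀ := by
        intro s hs
        have hUs := hmemt s hs
        have hg0 : sgrad D s r₀ ≠ 0 := hgrad _ hUs
        have hρ : ‖sgrad D s r₀‖ ≠ 0 := norm_ne_zero_iff.2 hg0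
        have hgd := hasDerivAt_sgrad_time hU hD hUs
        have hkey := key_rot ((uniqueDiffOn_Icc hlt) s hs) hs hgd (hφ s hs) hliftφ
        have hN : unitN D s r₀ = eVec (φ s) := unitN_eq hg0 (hliftφ s hs)
        have hT : unitT D s r₀ = rotCW (eVec (φ s)) := by rw [unitT, hN]
        rw [inner_Jvec_eq, ← hT] at hkey
        rw [omgGrad, ← hkey]
        field_simp
      have hmvt := Convex.norm_image_sub_le_of_norm_hasDerivWithin_le
        (f := φ) (f' := φ') (C := A)
        (fun x hx => (hφ x hx).hasDerivWithinAt)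
        (fun x hx => by
          rw [Real.norm_eq_abs, hder x hx]; exact hA (x, r₀) ⟨hx, hr₀⟩)
        (convex_Icc t₀ t₁) ⟨le_rfl, ht⟩ ⟨ht, le_rfl⟩
      rwa [Real.norm_eq_abs, Real.norm_eq_abs, abs_of_nonneg (sub_nonneg.2 ht)] at hmvt
  -- space part
  have hψbound : |ψ 1 - ψ 0| ≤ B * ‖v‖ := by
    have hder : ∀ s ∈ Icc (0:ℝ) 1, |ψ' s| ≤ B * ‖v‖ := by
      intro s hs
      have hUs := hmems s hs
      have hg0 : sgrad D t₁ (r₀ + s • v) ≠ 0 := hgrad _ hUs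
      have hρ0 : ‖sgrad D t₁ (r₀ + s • v)‖ ≠ 0 := norm_ne_zero_iff.2 hg0
      have hsp := hasFDerivAt_sgrad_space hU hD hUs
      have hline : HasDerivAt (fun u : ℝ => r₀ + u • v) v s := by
        simpa using ((hasDerivAt_id s).smul_const v).const_add r₀
      have hgd : HasDerivAt (fun u => sgrad D t₁ (r₀ + u • v))
          ((Lmap.comp ((fderiv ℝ (fderiv ℝ D) (t₁, r₀ + s • v)).comp
            (ContinuousLinearMap.inr ℝ ℝ Plane))) v) s :=
        hsp.comp_hasDerivAt s hline
      have hessv : hess D t₁ (r₀ + s • v) v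
          = (Lmap.comp ((fderiv ℝ (fderiv ℝ D) (t₁, r₀ + s • v)).comp
            (ContinuousLinearMap.inr ℝ ℝ Plane))) v := by
        unfold hess
        rw [hsp.fderiv]
      have hkey := key_rot ((uniqueDiffOn_Icc one_pos) s hs) hs hgd (hψ s hs) hliftψ
      have hN : unitN D t₁ (r₀ + s • v) = eVec (ψ s) := unitN_eq hg0 (hliftψ s hs)
      have hT : unitT D t₁ (r₀ + s • v) = rotCW (eVec (ψ s)) := by rw [unitT, hN]
      rw [inner_Jvec_eq, ← hT, ← hessv] at hkey
      -- hkey : ρ * ψ' s = -⟪hess v, T⟫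
      have hNn : ‖unitN D t₁ (r₀ + s • v)‖ = 1 := norm_unitN hg0
      have hTN : unitT D t₁ (r₀ + s • v) = rotCW (unitN D t₁ (r₀ + s • v)) := rfl
      have hdec : v = ⟪v, unitN D t₁ (r₀ + s • v)⟫ • unitN D t₁ (r₀ + s • v)
          + ⟪v, unitT D t₁ (r₀ + s • v)⟫ • unitT D t₁ (r₀ + s • v) := by
        rw [hTN]; exact decomp v _ hNn
      have hlin : hess D t₁ (r₀ + s • v) v
          = ⟪v, unitN D t₁ (r₀ + s • v)⟫ • hess D t₁ (r₀ + s • v) (unitN D t₁ (r₀ + s • v))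
          + ⟪v, unitT D t₁ (r₀ + s • v)⟫ • hess D t₁ (r₀ + s • v) (unitT D t₁ (r₀ + s • v)) := by
        have harg : hess D t₁ (r₀ + s • v) v
            = hess D t₁ (r₀ + s • v)
              (⟪v, unitN D t₁ (r₀ + s • v)⟫ • unitN D t₁ (r₀ + s • v)
                + ⟪v, unitT D t₁ (r₀ + s • v)⟫ • unitT D t₁ (r₀ + s • v)) := by
          exact congrArg _ hdec
        rw [harg]
        unfold hess
        rw [map_add, map_smul, map_smul]
      have hinner : ⟪hess D t₁ (r₀ + s • v) v, unitT D t₁ (r₀ + s • v)⟫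
          = ⟪v, unitN D t₁ (r₀ + s • v)⟫
              * ⟪hess D t₁ (r₀ + s • v) (unitN D t₁ (r₀ + s • v)), unitT D t₁ (r₀ + s • v)⟫
          + ⟪v, unitT D t₁ (r₀ + s • v)⟫
              * ⟪hess D t₁ (r₀ + s • v) (unitT D t₁ (r₀ + s • v)), unitT D t₁ (r₀ + s • v)⟫ := by
        rw [hlin, inner_add_left, real_inner_smul_left, real_inner_smul_left]
      have hκ : ⟪hess D t₁ (r₀ + s • v) (unitT D t₁ (r₀ + s • v)), unitT D t₁ (r₀ + s • v)⟫
          = -(kap D t₁ (r₀ + s • v) * ‖sgrad D t₁ (r₀ + s • v)‖) := by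
        rw [kap]; field_simp
      have hτ : ⟪hess D t₁ (r₀ + s • v) (unitN D t₁ (r₀ + s • v)), unitT D t₁ (r₀ + s • v)⟫
          = tauRho D t₁ (r₀ + s • v) * ‖sgrad D t₁ (r₀ + s • v)‖ := by
        rw [tauRho]; field_simp
      set K := kap D t₁ (r₀ + s • v) with hKdef
      set L := tauRho D t₁ (r₀ + s • v) with hLdef
      set a := ⟪v, unitN D t₁ (r₀ + s • v)⟫ with hadef
      set b := ⟪v, unitT D t₁ (r₀ + s • v)⟫ with hbdef
      have hψ' : ψ' s = kap D t₁ (r₀ + s • v) * ⟪v, unitT D t₁ (r₀ + s • v)⟫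
          - tauRho D t₁ (r₀ + s • v) * ⟪v, unitN D t₁ (r₀ + s • v)⟫ := by
        apply mul_left_cancel₀ hρ0
        rw [hkey, hinner, hκ, hτ]
        ring
      have hpar : ⟪v, unitN D t₁ (r₀ + s • v)⟫ ^ 2 + ⟪v, unitT D t₁ (r₀ + s • v)⟫ ^ 2
          = ‖v‖ ^ 2 := by
        rw [hTN]; exact parseval v _ hNn
      have hsq : (kap D t₁ (r₀ + s • v) * ⟪v, unitT D t₁ (r₀ + s • v)⟫
            - tauRho D t₁ (r₀ + s • v) * ⟪v, unitN D t₁ (r₀ + s • v)⟫) ^ 2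
          ≤ (kap D t₁ (r₀ + s • v) ^ 2 + tauRho D t₁ (r₀ + s • v) ^ 2) * ‖v‖ ^ 2 := by
        nlinarith [sq_nonneg (kap D t₁ (r₀ + s • v) * ⟪v, unitN D t₁ (r₀ + s • v)⟫
          + tauRho D t₁ (r₀ + s • v) * ⟪v, unitT D t₁ (r₀ + s • v)⟫), hpar]
      calc |ψ' s| = Real.sqrt ((ψ' s) ^ 2) := (Real.sqrt_sq_eq_abs _).symm
        _ ≤ Real.sqrt ((kap D t₁ (r₀ + s • v) ^ 2 + tauRho D t₁ (r₀ + s • v) ^ 2) * ‖v‖ ^ 2) :=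
            Real.sqrt_le_sqrt (by rw [hψ']; exact hsq)
        _ = Real.sqrt (kap D t₁ (r₀ + s • v) ^ 2 + tauRho D t₁ (r₀ + s • v) ^ 2) * ‖v‖ := by
            rw [Real.sqrt_mul (by positivity), Real.sqrt_sq (norm_nonneg v)]
        _ ≤ B * ‖v‖ := mul_le_mul_of_nonneg_right
            (hB (t₁, r₀ + s • v) ⟨⟨ht, le_rfl⟩, hcs s hs⟩) (norm_nonneg v)
    have hmvt := Convex.norm_image_sub_le_of_norm_hasDerivWithin_le
      (f := ψ) (f' := ψ') (C := B * ‖v‖)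
      (fun x hx => (hψ x hx).hasDerivWithinAt)
      (fun x hx => by rw [Real.norm_eq_abs]; exact hder x hx)
      (convex_Icc 0 1) (left_mem_Icc.2 zero_le_one) (right_mem_Icc.2 zero_le_one)
    simpa using hmvt
  have h1 : |ψ 1 - φ t₀| ≤ A * (t₁ - t₀) + B * ‖r₁ - r₀‖ := by
    have htri := abs_sub_le (ψ 1) (ψ 0) (φ t₀)
    rw [hjunction] at htri
    calc |ψ 1 - φ t₀| ≤ |ψ 1 - ψ 0| + |φ t₁ - φ t₀| := by
          have := abs_sub_le (ψ 1) (ψ 0) (φ t₀)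
          rw [hjunction] at this
          calc |ψ 1 - φ t₀| ≤ |ψ 1 - ψ 0| + |ψ 0 - φ t₀| := abs_sub_le _ _ _
            _ = |ψ 1 - ψ 0| + |φ t₁ - φ t₀| := by rw [hjunction]
      _ ≤ B * ‖v‖ + A * (t₁ - t₀) := add_le_add hψbound hφbound
      _ = A * (t₁ - t₀) + B * ‖r₁ - r₀‖ := by rw [hv]; ring
  refine ⟨h1, ?_⟩
  calc ENNReal.ofReal |ψ 1 - φ t₀|
      ≤ ENNReal.ofReal (A * (t₁ - t₀) + B * ‖r₁ - r₀‖) := ENNReal.ofReal_le_ofReal h1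
    _ ≤ ENNReal.ofReal (A * (t₁ - t₀)) + ENNReal.ofReal (B * ‖r₁ - r₀‖) :=
        ENNReal.ofReal_add_le
    _ ≤ ENNReal.ofReal (A * (t₁ - t₀)) + ENNReal.ofReal B * EMetric.diam C := by
        apply add_le_add_right
        rw [ENNReal.ofReal_mul hB0]
        apply mul_le_mul_right
        calc ENNReal.ofReal ‖r₁ - r₀‖ = edist r₁ r₀ := by rw [edist_dist, dist_eq_norm]
          _ ≤ EMetric.diam C := EMetric.edist_le_diam_of_mem hr₁ hr₀
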